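/- arXiv:1407.5782 — 3 statements merged into one kernel-verified Lean document; each statement's English description precedes it below -/
import Mathlib

section
/- Let A be an a.i.c. integral domain and let p ⊆ A be a prime ideal. Then the quotient A/p is again an a.i.c. integral domain. -/
open Polynomial

/-- In a domain where every monic polynomial of positive degree has a root, every monic
polynomial factors completely into linear factors. -/
private lemma aic_splits {R : Type*} [CommRing R] [IsDomain R]
    (h : ∀ f : R[X], f.Monic → 0 < f.natDegree → ∃ r, f.IsRoot r) :
    ∀ n (f : R[X]), f.natDegree = n → f.Monic →
      ∃ s : Multiset R, f = (s.map fun r => X - C r).prod := by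
  intro n
  induction n using Nat.strong_induction_on with
  | _ n ih =>
    intro f hdeg hm
    rcases Nat.eq_zero_or_pos n with h0 | hpos
    · refine ⟨0, ?_⟩
      simp [hm.natDegree_eq_zero.mp (hdeg.trans h0)]
    · obtain ⟨r, hr⟩ := h f hm (hdeg ▸ hpos)
      obtain ⟨g, hg⟩ := (dvd_iff_isRoot.mpr hr)
      have hgm : g.Monic := (monic_X_sub_C r).of_mul_monic_left (hg ▸ hm)
      have hdg : g.natDegree = n - 1 := by
        have := (monic_X_sub_C r).natDegree_mul hgm
        rw [← hg, hdeg, natDegree_X_sub_C] at this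
        omega
      obtain ⟨s, hs⟩ := ih (n - 1) (by omega) g hdg hgm
      exact ⟨r ::ₘ s, by rw [hg, hs]; simp [mul_comm]⟩

/-- In an a.i.c. domain, every monic polynomial of positive degree has a root. -/
private lemma aic_root {A : Type*} [CommRing A] [IsDomain A] [IsIntegrallyClosed A]
    [IsAlgClosed (FractionRing A)] :
    ∀ f : A[X], f.Monic → 0 < f.natDegree → ∃ r, f.IsRoot r := by
  intro f hm hdeg
  set K := FractionRing A
  have hd : (f.map (algebraMap A K)).degree ≠ 0 := by
    have : 0 < (f.map (algebraMap A K)).natDegree := by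
      rwa [hm.natDegree_map]
    exact (natDegree_pos_iff_degree_pos.mp this).ne'
  obtain ⟨x, hx⟩ := IsAlgClosed.exists_root (f.map (algebraMap A K)) hd
  have hint : IsIntegral A x :=
    ⟨f, hm, by rwa [IsRoot, eval_map] at hx⟩
  obtain ⟨y, hy⟩ := IsIntegrallyClosed.isIntegral_iff.mp hint
  refine ⟨y, ?_⟩
  apply IsFractionRing.injective A K
  rw [map_zero, ← eval₂_hom (algebraMap A K) y, ← eval_map, hy]
  exact hx

/-- The root property passes to quotients by prime ideals. -/
private lemma aic_root_quotient {A : Type} [CommRing A] [IsDomain A] [IsIntegrallyClosed A]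
    [IsAlgClosed (FractionRing A)] (p : Ideal A) [p.IsPrime] :
    ∀ f : Polynomial (A ⧸ p), f.Monic → 0 < f.natDegree → ∃ r, f.IsRoot r := by
  intro f hm hdeg
  have hf : f ∈ Polynomial.lifts (Ideal.Quotient.mk p) :=
    (Polynomial.mem_lifts f).mpr (Polynomial.map_surjective _ Ideal.Quotient.mk_surjective f)
  obtain ⟨q, hq, hdq, hqm⟩ := Polynomial.lifts_and_degree_eq_and_monic hf hm
  obtain ⟨r, hr⟩ := aic_root q hqm (by rwa [natDegree_eq_of_degree_eq hdq])
  refine ⟨Ideal.Quotient.mk p r, ?_⟩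
  rw [IsRoot, ← hq, eval_map, eval₂_hom, hr.eq_zero, map_zero]

/-- A domain with the root property is integrally closed. -/
private lemma aic_integrallyClosed {R : Type*} [CommRing R] [IsDomain R]
    (h : ∀ f : R[X], f.Monic → 0 < f.natDegree → ∃ r, f.IsRoot r) :
    IsIntegrallyClosed R := by
  refine (isIntegrallyClosed_iff (FractionRing R)).mpr ?_
  rintro x ⟨f, hm, hev⟩
  obtain ⟨s, hs⟩ := aic_splits h f.natDegree f rfl hm
  rw [hs] at hev
  rw [← aeval_def, map_multiset_prod, Multiset.map_map, Multiset.prod_eq_zero_iff] at hev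
  obtain ⟨r, _, hr0⟩ := Multiset.mem_map.mp hev
  refine ⟨r, ?_⟩
  simp only [Function.comp_apply, map_sub, aeval_X, aeval_C] at hr0
  linear_combination -hr0

/-- A domain with the root property has algebraically closed fraction field. -/
private lemma aic_algClosed {R : Type*} [CommRing R] [IsDomain R]
    (h : ∀ f : R[X], f.Monic → 0 < f.natDegree → ∃ r, f.IsRoot r) :
    IsAlgClosed (FractionRing R) := by
  set K := FractionRing R
  apply IsAlgClosed.of_exists_root
  intro q hqm hqirr
  set f := IsLocalization.integerNormalization (nonZeroDivisors R) q with hf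
  have hq0 : q ≠ 0 := hqm.ne_zero
  have hf0 : f ≠ 0 := fun hz => hq0 (IsFractionRing.integerNormalization_eq_zero_iff.mp hz)
  obtain ⟨b, hb⟩ := IsLocalization.integerNormalization_map_to_map (nonZeroDivisors R) q
  have hbne : algebraMap R K (b : R) ≠ 0 := by
    simpa using IsFractionRing.to_map_ne_zero_of_mem_nonZeroDivisors b.2
  have hfdeg : 0 < f.natDegree := by
    have h1 : 0 < q.natDegree := hqirr.natDegree_pos
    have h2 : (f.map (algebraMap R K)).natDegree = q.natDegree := by
      rw [hb, Algebra.smul_def, Polynomial.algebraMap_apply, natDegree_C_mul hbne]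
    calc 0 < q.natDegree := h1
      _ = (f.map (algebraMap R K)).natDegree := h2.symm
      _ ≤ f.natDegree := natDegree_map_le
  set g := f.integralNormalization with hgdef
  have hgm : g.Monic := monic_integralNormalization hf0
  have hgdeg : 0 < g.natDegree := by
    have := degree_integralNormalization (p := f)
    rwa [natDegree_eq_of_degree_eq this]
  obtain ⟨r, hr⟩ := h g hgm hgdeg
  have hane : algebraMap R K f.leadingCoeff ≠ 0 := by
    simpa using (map_ne_zero_iff _ (IsFractionRing.injective R K)).mpr
      (leadingCoeff_ne_zero.mpr hf0)
  set x : K := algebraMap R K r / algebraMap R K f.leadingCoeff with hx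
  have hmul : algebraMap R K f.leadingCoeff * x = algebraMap R K r := by
    rw [hx, mul_div_cancel₀ _ hane]
  have key := integralNormalization_eval₂_leadingCoeff_mul (p := f) hfdeg (algebraMap R K) x
  rw [hmul, eval₂_hom, hr.eq_zero, map_zero] at key
  have hfev : eval₂ (algebraMap R K) x f = 0 := by
    rcases mul_eq_zero.mp key.symm with h' | h'
    · exact absurd h' (pow_ne_zero _ hane)
    · exact h'
  refine ⟨x, ?_⟩
  have : (f.map (algebraMap R K)).eval x = 0 := by rwa [eval_map]
  rw [hb, Algebra.smul_def, Polynomial.algebraMap_apply, eval_mul, eval_C] at this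
  rcases mul_eq_zero.mp this with h' | h'
  · exact absurd h' hbne
  · exact h'

/-- If `A` is an a.i.c. integral domain (integrally closed with algebraically closed
fraction field) and `p ⊆ A` is a prime ideal, then `A ⧸ p` is again an a.i.c. integral
domain. -/
theorem quotient_by_prime_aic {A : Type} [CommRing A] [IsDomain A] [IsIntegrallyClosed A]
    [IsAlgClosed (FractionRing A)] (p : Ideal A) [p.IsPrime] :
    IsDomain (A ⧸ p) ∧ IsIntegrallyClosed (A ⧸ p) ∧ IsAlgClosed (FractionRing (A ⧸ p)) := by
  have hdom : IsDomain (A ⧸ p) := Ideal.Quotient.isDomain p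
  have hroot := aic_root_quotient p
  exact ⟨hdom, aic_integrallyClosed hroot, aic_algClosed hroot⟩
end

section
/- Let A be an a.i.c. integral domain and let B ⊆ A be a subring that is integrally closed in A. Then B is an a.i.c. integral domain. -/
set_option maxHeartbeats 1000000 in
set_option synthInstance.maxHeartbeats 400000 in
/-- If `A` is an a.i.c. integral domain and `B ⊆ A` is a subring that is integrally
closed in `A` (every element of `A` integral over `B` lies in `B`), then `B` is an
a.i.c. integral domain. -/
theorem subring_integrally_closed_aic {A : Type} [CommRing A] [IsDomain A]
    [IsIntegrallyClosed A] [IsAlgClosed (FractionRing A)] (B : Subring A)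
    (hB : ∀ x : A, IsIntegral B x → x ∈ B) :
    IsIntegrallyClosed B ∧ IsAlgClosed (FractionRing B) := by
  set F := FractionRing A
  set K := FractionRing B
  have hBA : Function.Injective (algebraMap B A) := Subtype.val_injective
  have hAF : Function.Injective (algebraMap A F) := IsFractionRing.injective A F
  have hBF : Function.Injective (algebraMap B F) := by
    rw [IsScalarTower.algebraMap_eq B A F]; exact hAF.comp hBA
  let g : K →+* F := IsFractionRing.lift hBF
  have hg : ∀ b : B, g (algebraMap B K b) = algebraMap B F b := fun b =>
    IsFractionRing.lift_algebraMap hBF b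
  have hginj : Function.Injective g := g.injective
  letI : Algebra K F := g.toAlgebra
  haveI : IsScalarTower B K F := IsScalarTower.of_algebraMap_eq fun b => (hg b).symm
  -- every element of F integral over B is in the image of B
  have key : ∀ z : F, IsIntegral B z → ∃ b : B, algebraMap B F b = z := by
    intro z hz
    have hzA : IsIntegral A z := hz.tower_top
    obtain ⟨a, ha⟩ := IsIntegrallyClosed.isIntegral_iff.mp hzA
    have haB : IsIntegral B a := by
      refine (isIntegral_algHom_iff (IsScalarTower.toAlgHom B A F) hAF).mp ?_
      show IsIntegral B (algebraMap A F a)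
      rwa [ha]
    refine ⟨⟨a, hB a haB⟩, ?_⟩
    rw [IsScalarTower.algebraMap_apply B A F]
    exact ha
  constructor
  · rw [isIntegrallyClosed_iff K]
    intro x hx
    have hgx : IsIntegral B (g x) := by
      have := hx.map (IsScalarTower.toAlgHom B K F)
      exact this
    obtain ⟨b, hb⟩ := key (g x) hgx
    exact ⟨b, hginj (by rw [hg b, hb])⟩
  · apply IsAlgClosed.of_exists_root
    intro p pmonic pirr
    have hdeg : (p.map (g : K →+* F)).degree ≠ 0 := by
      rw [Polynomial.degree_map_eq_of_injective hginj]
      intro h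
      exact pirr.not_isUnit (Polynomial.isUnit_iff_degree_eq_zero.mpr h)
    obtain ⟨α, hα⟩ := IsAlgClosed.exists_root (p.map (g : K →+* F)) hdeg
    have hKα : IsIntegral K α := ⟨p, pmonic, by
      show Polynomial.eval₂ (algebraMap K F) α p = 0
      rw [Polynomial.eval₂_eq_eval_map]
      exact hα⟩
    have hBα : IsAlgebraic B α := (IsFractionRing.isAlgebraic_iff B K F).mpr hKα.isAlgebraic
    obtain ⟨x, y, hy0, hxy⟩ : ∃ x : integralClosure B F, ∃ y ≠ (0 : B),
        algebraMap B F y * α = x := by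
      obtain ⟨y, hy0, hint⟩ := hBα.exists_integral_multiple
      exact ⟨⟨_, hint⟩, y, hy0, (Algebra.smul_def y α).symm⟩
    obtain ⟨c, hc⟩ := key (x : F) x.2
    have hyF : algebraMap B F y ≠ 0 := fun h => hy0 (hBF (by rwa [map_zero]))
    have hyK : algebraMap B K y ≠ 0 := fun h => hy0 ((IsFractionRing.injective B K) (by rwa [map_zero]))
    refine ⟨algebraMap B K c / algebraMap B K y, ?_⟩
    have hgr : g (algebraMap B K c / algebraMap B K y) = α := by
      rw [map_div₀, hg, hg, hc, ← hxy]
      exact mul_div_cancel_left₀ α hyF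
    have h0 : g (p.eval (algebraMap B K c / algebraMap B K y)) = 0 := by
      rw [← Polynomial.eval₂_hom, ← Polynomial.eval_map, hgr]
      exact hα
    exact hginj (by rwa [map_zero])
end

section
/- Let R be a strictly henselian local ring in the sense that every jointly surjective finite family of étale ring maps R → B_i of finite presentation admits an R-algebra retraction B_i → R for some i. Then the residue field of R is separably closed. (Partial converse direction of the classical characterization.) -/
open Polynomial

section AuxEtale

variable {R : Type*} [CommRing R]

/-- If `x` is a unit modulo a square-zero ideal, then `x` is a unit. -/
lemma aux_isUnit_of_sq_zero {B : Type*} [CommRing B] {I : Ideal B} (hI : I ^ 2 = ⊥) {x : B}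
    (h : IsUnit (Ideal.Quotient.mk I x)) : IsUnit x := by
  obtain ⟨y, hy⟩ := h.exists_right_inv
  obtain ⟨y, rfl⟩ := Ideal.Quotient.mk_surjective y
  rw [← map_mul, ← map_one (Ideal.Quotient.mk I), Ideal.Quotient.mk_eq_mk_iff_sub_mem] at hy
  have he : (x * y - 1) * (x * y - 1) = 0 := by
    have : (x * y - 1) * (x * y - 1) ∈ I ^ 2 := by
      rw [sq]; exact Ideal.mul_mem_mul hy hy
    rwa [hI, Ideal.mem_bot] at this
  exact IsUnit.of_mul_eq_one (a := x) (y * (2 - x * y)) (by linear_combination -he)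

/-- First-order Taylor expansion at a square-zero element. -/
lemma aux_aeval_add_sq_zero {B : Type*} [CommRing B] [Algebra R B] (f : R[X]) (x y : B)
    (hy : y * y = 0) :
    aeval (x + y) f = aeval x f + aeval x (derivative f) * y := by
  obtain ⟨k, hk⟩ := (f.map (algebraMap R B)).binomExpansion x y
  rw [derivative_map] at hk
  simp only [aeval_def, ← eval_map]
  rw [hk, sq, hy, mul_zero, add_zero]

/-- A standard étale algebra `R[X]/(f)` with `f'` invertible is formally étale. -/
lemma aux_formallyEtale_adjoinRoot (f : R[X])
    (hu : IsUnit (aeval (AdjoinRoot.root f) (derivative f))) :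
    Algebra.FormallyEtale R (AdjoinRoot f) := by
  rw [Algebra.FormallyEtale.iff_comp_bijective]
  intro B _ _ I hI
  constructor
  · intro g₁ g₂ hg
    apply AdjoinRoot.algHom_ext
    set x₁ := g₁ (AdjoinRoot.root f) with hx₁
    set x₂ := g₂ (AdjoinRoot.root f) with hx₂
    have hδ : x₂ - x₁ ∈ I := by
      rw [← Ideal.Quotient.mk_eq_mk_iff_sub_mem]
      have := congrArg (fun g : AdjoinRoot f →ₐ[R] B ⧸ I => g (AdjoinRoot.root f)) hg
      simpa [Ideal.Quotient.mkₐ_eq_mk] using this.symm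
    have h1 : aeval x₁ f = 0 := by
      rw [hx₁, aeval_algHom_apply, AdjoinRoot.aeval_eq, AdjoinRoot.mk_self, map_zero]
    have h2 : aeval x₂ f = 0 := by
      rw [hx₂, aeval_algHom_apply, AdjoinRoot.aeval_eq, AdjoinRoot.mk_self, map_zero]
    have hsq : (x₂ - x₁) * (x₂ - x₁) = 0 := by
      have : (x₂ - x₁) * (x₂ - x₁) ∈ I ^ 2 := by rw [sq]; exact Ideal.mul_mem_mul hδ hδ
      rwa [hI, Ideal.mem_bot] at this
    have key := aux_aeval_add_sq_zero f x₁ (x₂ - x₁) hsq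
    rw [add_sub_cancel, h1, h2, zero_add] at key
    have hux : IsUnit (aeval x₁ (derivative f)) := by
      apply aux_isUnit_of_sq_zero hI
      rw [hx₁, aeval_algHom_apply]
      exact hu.map ((Ideal.Quotient.mk I).comp (g₁ : AdjoinRoot f →+* B))
    have := (IsUnit.mul_right_eq_zero hux).mp key.symm
    rw [sub_eq_zero] at this
    exact this.symm
  · intro g
    obtain ⟨c, hc⟩ := Ideal.Quotient.mk_surjective (g (AdjoinRoot.root f))
    have hgf : aeval (g (AdjoinRoot.root f)) f = 0 := by
      rw [aeval_algHom_apply, AdjoinRoot.aeval_eq, AdjoinRoot.mk_self, map_zero]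
    have hmk : ∀ p : R[X], Ideal.Quotient.mk I (aeval c p)
        = aeval (g (AdjoinRoot.root f)) p := by
      intro p
      have := aeval_algHom_apply (Ideal.Quotient.mkₐ R I) c p
      simp only [Ideal.Quotient.mkₐ_eq_mk] at this
      rw [← this, hc]
    have hcf : aeval c f ∈ I := by
      rw [← Ideal.Quotient.eq_zero_iff_mem, hmk, hgf]
    have hcu : IsUnit (aeval c (derivative f)) := by
      apply aux_isUnit_of_sq_zero hI
      rw [hmk, aeval_algHom_apply]
      exact hu.map _
    obtain ⟨w, hw⟩ := hcu.exists_right_inv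
    set c' := c + (-(aeval c f * w)) with hc'
    have hmem : -(aeval c f * w) ∈ I := neg_mem (Ideal.mul_mem_right w I hcf)
    have hsq : (-(aeval c f * w)) * (-(aeval c f * w)) = 0 := by
      have : (-(aeval c f * w)) * (-(aeval c f * w)) ∈ I ^ 2 := by
        rw [sq]; exact Ideal.mul_mem_mul hmem hmem
      rwa [hI, Ideal.mem_bot] at this
    have hroot : aeval c' f = 0 := by
      rw [hc', aux_aeval_add_sq_zero f c _ hsq]
      linear_combination -(aeval c f) * hw
    refine ⟨AdjoinRoot.liftAlgHom f (Algebra.ofId R B) c' hroot, ?_⟩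
    apply AdjoinRoot.algHom_ext
    show Ideal.Quotient.mk I ((AdjoinRoot.liftAlgHom f (Algebra.ofId R B) c' hroot) (AdjoinRoot.root f))
        = g (AdjoinRoot.root f)
    erw [AdjoinRoot.liftAlgHom_root]
    rw [hc', map_add, ← hc,
      Ideal.Quotient.eq_zero_iff_mem.mpr hmem, add_zero]

end AuxEtale

section AuxLocal

variable {R : Type} [CommRing R] [IsLocalRing R]

/-- If `f` is monic and reduces to a separable polynomial over the residue field, then
the derivative of `f` is invertible in `R[X]/(f)`. -/
lemma aux_isUnit_derivative (f : R[X]) (hfmonic : f.Monic)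
    (hsep : (f.map (IsLocalRing.residue R)).Separable) :
    IsUnit (aeval (AdjoinRoot.root f) (derivative f)) := by
  obtain ⟨a', b', hab'⟩ := hsep
  obtain ⟨a, rfl⟩ := Polynomial.map_surjective _ IsLocalRing.residue_surjective a'
  obtain ⟨b, rfl⟩ := Polynomial.map_surjective _ IsLocalRing.residue_surjective b'
  set e := a * f + b * derivative f - 1 with he
  have hemem : e ∈ Ideal.map (C : R →+* R[X]) (IsLocalRing.maximalIdeal R) := by
    rw [Ideal.mem_map_C_iff]
    intro n
    have : e.map (IsLocalRing.residue R) = 0 := by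
      rw [he]
      push_cast [Polynomial.map_sub, Polynomial.map_add, Polynomial.map_mul,
        Polynomial.map_one]
      rw [← Polynomial.derivative_map]
      linear_combination hab'
    have := congrArg (fun p => p.coeff n) this
    simp only [Polynomial.coeff_map, Polynomial.coeff_zero] at this
    exact (Ideal.Quotient.eq_zero_iff_mem).mp this
  set B := AdjoinRoot f with hB
  have hfin : Module.Finite R B := Module.Finite.of_basis (AdjoinRoot.powerBasis' hfmonic).basis
  have hintB : Algebra.IsIntegral R B := Algebra.IsIntegral.of_finite R B
  have hjac : AdjoinRoot.mk f e ∈ Ideal.jacobson (⊥ : Ideal B) := by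
    rw [Ideal.jacobson]
    rw [Ideal.mem_sInf]
    rintro J ⟨-, hJmax⟩
    have : Ideal.comap (algebraMap R B) J = IsLocalRing.maximalIdeal R :=
      IsLocalRing.eq_maximalIdeal (Ideal.isMaximal_comap_of_isIntegral_of_isMaximal J)
    have hle : Ideal.map (algebraMap R B) (IsLocalRing.maximalIdeal R) ≤ J := by
      rw [← this]; exact Ideal.map_comap_le
    apply hle
    have : AdjoinRoot.mk f e ∈ Ideal.map (AdjoinRoot.mk f)
        (Ideal.map (C : R →+* R[X]) (IsLocalRing.maximalIdeal R)) :=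
      Ideal.mem_map_of_mem _ hemem
    rw [Ideal.map_map] at this
    rwa [show (AdjoinRoot.mk f).comp C = algebraMap R B from (AdjoinRoot.algebraMap_eq f).symm]
      at this
  have hunit : IsUnit (AdjoinRoot.mk f e + 1) := by
    have := Ideal.mem_jacobson_bot.mp hjac 1
    rwa [mul_one] at this
  have hkey : (aeval (AdjoinRoot.root f) (derivative f)) * AdjoinRoot.mk f b
      = AdjoinRoot.mk f e + 1 := by
    rw [AdjoinRoot.aeval_eq, ← map_mul, he]
    simp only [map_sub, map_add, map_mul, AdjoinRoot.mk_self, map_one, mul_zero, zero_mul]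
    ring
  exact isUnit_of_mul_isUnit_left (hkey ▸ hunit)

/-- The structure map into `R[X]/(f)` is injective for `f` monic of positive degree. -/
lemma aux_algebraMap_injective (f : R[X]) (hfmonic : f.Monic) (hdeg : 0 < f.natDegree) :
    Function.Injective (algebraMap R (AdjoinRoot f)) := by
  set pb := AdjoinRoot.powerBasis' hfmonic with hpb
  have hdim : pb.dim = f.natDegree := rfl
  intro r s hrs
  have h1 : pb.basis ⟨0, hdim ▸ hdeg⟩ = 1 := by
    rw [PowerBasis.coe_basis]; simp
  have h2 : r • pb.basis ⟨0, hdim ▸ hdeg⟩ = s • pb.basis ⟨0, hdim ▸ hdeg⟩ := by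
    rw [h1, ← Algebra.algebraMap_eq_smul_one, ← Algebra.algebraMap_eq_smul_one, hrs]
  have h3 := congrArg (fun x => (pb.basis.repr x) ⟨0, hdim ▸ hdeg⟩) h2
  simp only [map_smul, Module.Basis.repr_self, Finsupp.smul_apply, Finsupp.single_eq_same,
    smul_eq_mul, mul_one] at h3
  exact h3

/-- `Spec (R[X]/(f)) → Spec R` is surjective for `f` monic of positive degree. -/
lemma aux_spec_surjective (f : R[X]) (hfmonic : f.Monic) (hdeg : 0 < f.natDegree)
    (p : PrimeSpectrum R) :
    ∃ q : PrimeSpectrum (AdjoinRoot f),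
      PrimeSpectrum.comap (algebraMap R (AdjoinRoot f)) q = p := by
  have hinj := aux_algebraMap_injective f hfmonic hdeg
  have hfin : Module.Finite R (AdjoinRoot f) :=
    Module.Finite.of_basis (AdjoinRoot.powerBasis' hfmonic).basis
  have hint : Algebra.IsIntegral R (AdjoinRoot f) := Algebra.IsIntegral.of_finite _ _
  obtain ⟨Q, -, hQprime, hQcomap⟩ :=
    Ideal.exists_ideal_over_prime_of_isIntegral p.asIdeal (⊥ : Ideal (AdjoinRoot f)) (by
      intro x hx
      rw [Ideal.mem_comap, Ideal.mem_bot] at hx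
      have : x = 0 := by
        apply hinj; rw [hx, map_zero]
      rw [this]; exact p.asIdeal.zero_mem)
  exact ⟨⟨Q, hQprime⟩, PrimeSpectrum.ext hQcomap⟩

end AuxLocal

/-- Let `R` be a local ring which is "strictly henselian" in the sense that for every
finite family of étale `R`-algebras of finite presentation `B_1, …, B_n` which
jointly cover `Spec R`, some `B_i` admits an `R`-algebra retraction.  Then the
residue field of `R` is separably closed: it has no nontrivial finite separable
field extensions. -/
theorem residueField_separablyClosed_of_etale_covers_split {R : Type} [CommRing R]
    [IsLocalRing R]
    (h : ∀ (n : ℕ) (B : Fin n → Type) [∀ i, CommRing (B i)] [∀ i, Algebra R (B i)],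
      (∀ i, Algebra.Etale R (B i)) →
      (∀ p : PrimeSpectrum R, ∃ (i : Fin n) (q : PrimeSpectrum (B i)),
        PrimeSpectrum.comap (algebraMap R (B i)) q = p) →
      ∃ i, Nonempty (B i →ₐ[R] R)) :
    ∀ (L : Type) [Field L] [Algebra (IsLocalRing.ResidueField R) L]
      [Algebra.IsSeparable (IsLocalRing.ResidueField R) L]
      [Module.Finite (IsLocalRing.ResidueField R) L],
      Function.Bijective (algebraMap (IsLocalRing.ResidueField R) L) := by
  intro L _ _ _ _
  set κ := IsLocalRing.ResidueField R with hκ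
  refine ⟨(algebraMap κ L).injective, ?_⟩
  obtain ⟨α, hα⟩ := Field.exists_primitive_element κ L
  have hint : IsIntegral κ α := Algebra.IsIntegral.isIntegral α
  have hmon : (minpoly κ α).Monic := minpoly.monic hint
  -- lift the minimal polynomial to a monic polynomial over R
  obtain ⟨f, hfmap, hfdeg, hfmonic⟩ :=
    Polynomial.lifts_and_degree_eq_and_monic
      ((Polynomial.mem_lifts _).mpr
        ((Polynomial.map_surjective _ IsLocalRing.residue_surjective) (minpoly κ α))) hmon
  have hdeg : 0 < f.natDegree := by
    rw [Polynomial.natDegree_eq_of_degree_eq hfdeg]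
    exact minpoly.natDegree_pos hint
  have hsep : (f.map (IsLocalRing.residue R)).Separable := by
    rw [hfmap]
    exact Algebra.IsSeparable.isSeparable κ α
  have hu := aux_isUnit_derivative f hfmonic hsep
  -- the étale cover by a single algebra
  haveI hfe : Algebra.FormallyEtale R (AdjoinRoot f) := aux_formallyEtale_adjoinRoot f hu
  haveI hfp : Algebra.FinitePresentation R (AdjoinRoot f) :=
    Algebra.FinitePresentation.quotient ⟨{f}, by simp⟩
  have hET : Algebra.Etale R (AdjoinRoot f) := ⟨hfe, hfp⟩
  obtain ⟨i, ⟨φ⟩⟩ := h 1 (fun _ => AdjoinRoot f) (fun _ => hET)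
    (fun p => ⟨0, aux_spec_surjective f hfmonic hdeg p⟩)
  -- extract a root of f in R
  set r0 := φ (AdjoinRoot.root f) with hr0
  have hfr : aeval r0 f = 0 := by
    rw [hr0, aeval_algHom_apply, AdjoinRoot.aeval_eq, AdjoinRoot.mk_self, map_zero]
  have hres : (minpoly κ α).IsRoot (IsLocalRing.residue R r0) := by
    have h5 : eval (IsLocalRing.residue R r0) (f.map (IsLocalRing.residue R))
        = IsLocalRing.residue R (eval r0 f) := by
      rw [eval_map, eval₂_hom]
    rw [IsRoot, ← hfmap, h5]
    have : eval r0 f = aeval r0 f := by rw [coe_aeval_eq_eval]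
    rw [this, hfr, map_zero]
  have hirr : Irreducible (minpoly κ α) := minpoly.irreducible hint
  obtain ⟨q, hq⟩ := dvd_iff_isRoot.mpr hres
  have hdeg1 : (minpoly κ α).degree = 1 := by
    rcases hirr.isUnit_or_isUnit hq with h' | h'
    · exact absurd h' (Polynomial.not_isUnit_X_sub_C _)
    · rw [hq, degree_mul, degree_X_sub_C, Polynomial.degree_eq_zero_of_isUnit h', add_zero]
  have hmem : α ∈ (algebraMap κ L).range := minpoly.degree_eq_one_iff.mp hdeg1
  intro x
  have : x ∈ (⊥ : IntermediateField κ L) := by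
    rw [← IntermediateField.adjoin_simple_eq_bot_iff.mpr (IntermediateField.mem_bot.mpr hmem),
      hα]
    trivial
  exact IntermediateField.mem_bot.mp this
end
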